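/- (Local Hadamard from global Hadamards.) Work in the 4-qubit state space ℂ^{Bool⁴} with qubits labelled a, b, c, d. Let Λ_{cd}(X_b) and Λ_{cd}(X_a) denote the generalised Toffoli gates that flip qubit b (respectively qubit a) exactly when qubits c and d are both 1, and let H⁴ denote the global Hadamard operator H ⊗ H ⊗ H ⊗ H. Then for all s, t ∈ {0,1}, the composite operator Λ_{cd}(X_b) ∘ H⁴ ∘ Λ_{cd}(X_a) ∘ H⁴ ∘ Λ_{cd}(X_b) maps the state |1⟩_a ⊗ |−⟩_b ⊗ |s⟩_c ⊗ |t⟩_d to |1⟩_a ⊗ |−⟩_b ⊗ (H|s⟩)_c ⊗ (H|t⟩)_d. In particular it maps |1,−,0,0⟩ ↦ |1,−,+,+⟩, |1,−,0,1⟩ ↦ |1,−,−,+⟩, |1,−,1,0⟩ ↦ |1,−,+,−⟩ and |1,−,1,1⟩ ↦ |1,−,−,−⟩. -/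

import Mathlib

set_option maxHeartbeats 1000000 in
/-- Auxiliary: `H4` applied to a state that factors as
(qubit a) ⊗ (qubit b) ⊗ (2-qubit cd part). -/
lemma h4ApplyProdAux
    (H4 : EuclideanSpace ℂ (Bool × Bool × Bool × Bool) →ₗ[ℂ]
      EuclideanSpace ℂ (Bool × Bool × Bool × Bool))
    (hH4 : ∀ (ψ : EuclideanSpace ℂ (Bool × Bool × Bool × Bool))
      (x : Bool × Bool × Bool × Bool),
      H4 ψ x = (1 / 4 : ℂ) * ∑ y : Bool × Bool × Bool × Bool,
        (if xor (x.1 && y.1) (xor (x.2.1 && y.2.1)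
            (xor (x.2.2.1 && y.2.2.1) (x.2.2.2 && y.2.2.2))) then -1 else 1) * ψ y)
    (ψ : EuclideanSpace ℂ (Bool × Bool × Bool × Bool))
    (A : ℂ) (f g : Bool → ℂ) (m : Bool → Bool → ℂ)
    (hψ : ∀ y : Bool × Bool × Bool × Bool,
      ψ y = A * (f y.1 * g y.2.1 * m y.2.2.1 y.2.2.2))
    (x : Bool × Bool × Bool × Bool) :
    H4 ψ x = A * (1/4) *
      ((f false + (if x.1 then -1 else 1) * f true) *
       (g false + (if x.2.1 then -1 else 1) * g true) *
       (m false false + (if x.2.2.1 then -1 else 1) * m true false +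
        (if x.2.2.2 then -1 else 1) * m false true +
        (if x.2.2.1 then -1 else 1) * (if x.2.2.2 then -1 else 1) * m true true)) := by
  rw [hH4]
  simp only [hψ, Fintype.sum_prod_type, Fintype.sum_bool]
  obtain ⟨a, b, c, d⟩ := x
  rcases a <;> rcases b <;> rcases c <;> rcases d <;> norm_num <;> ring

set_option maxHeartbeats 2000000 in
/-- Equations (6)–(7) of the paper (local Hadamard from global Hadamards):
on the 4-qubit space with qubits `a, b, c, d`, the composite
`Λ_{cd}(X_b) ∘ H⁴ ∘ Λ_{cd}(X_a) ∘ H⁴ ∘ Λ_{cd}(X_b)` maps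
`|1⟩_a ⊗ |−⟩_b ⊗ |s⟩_c ⊗ |t⟩_d` to `|1⟩_a ⊗ |−⟩_b ⊗ (H|t⟩)_c ⊗ (H|s⟩)_d`;
in particular `|1,−,0,0⟩ ↦ |1,−,+,+⟩`, `|1,−,0,1⟩ ↦ |1,−,−,+⟩`,
`|1,−,1,0⟩ ↦ |1,−,+,−⟩` and `|1,−,1,1⟩ ↦ |1,−,−,−⟩`.
Here a 4-qubit basis label is `(x_a, x_b, x_c, x_d) : Bool × Bool × Bool × Bool`,
`Tb = Λ_{cd}(X_b)` XORs bit `b` with `x_c AND x_d`, `Ta = Λ_{cd}(X_a)` XORs bit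
`a` with `x_c AND x_d`, and `H4 = H ⊗ H ⊗ H ⊗ H` has entries `2⁻²·(−1)^{x·y}`. -/
theorem localHadamardFromGlobal
    (Tb Ta H4 : EuclideanSpace ℂ (Bool × Bool × Bool × Bool) →ₗ[ℂ]
      EuclideanSpace ℂ (Bool × Bool × Bool × Bool))
    (hTb : ∀ (ψ : EuclideanSpace ℂ (Bool × Bool × Bool × Bool))
      (x : Bool × Bool × Bool × Bool),
      Tb ψ x = ψ (x.1, xor x.2.1 (x.2.2.1 && x.2.2.2), x.2.2.1, x.2.2.2))
    (hTa : ∀ (ψ : EuclideanSpace ℂ (Bool × Bool × Bool × Bool))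
      (x : Bool × Bool × Bool × Bool),
      Ta ψ x = ψ (xor x.1 (x.2.2.1 && x.2.2.2), x.2.1, x.2.2.1, x.2.2.2))
    (hH4 : ∀ (ψ : EuclideanSpace ℂ (Bool × Bool × Bool × Bool))
      (x : Bool × Bool × Bool × Bool),
      H4 ψ x = (1 / 4 : ℂ) * ∑ y : Bool × Bool × Bool × Bool,
        (if xor (x.1 && y.1) (xor (x.2.1 && y.2.1)
            (xor (x.2.2.1 && y.2.2.1) (x.2.2.2 && y.2.2.2))) then -1 else 1) * ψ y)
    (s t : Bool)
    (ψin ψout : EuclideanSpace ℂ (Bool × Bool × Bool × Bool))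
    -- `ψin = |1⟩_a ⊗ |−⟩_b ⊗ |s⟩_c ⊗ |t⟩_d`
    (hψin : ∀ x : Bool × Bool × Bool × Bool,
      ψin x = (if x.1 = true then 1 else 0) *
        (((Real.sqrt 2 : ℝ) : ℂ)⁻¹ * (if x.2.1 then -1 else 1)) *
        (if x.2.2.1 = s then 1 else 0) * (if x.2.2.2 = t then 1 else 0))
    -- `ψout = |1⟩_a ⊗ |−⟩_b ⊗ (H|t⟩)_c ⊗ (H|s⟩)_d`
    (hψout : ∀ x : Bool × Bool × Bool × Bool,
      ψout x = (if x.1 = true then 1 else 0) *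
        (((Real.sqrt 2 : ℝ) : ℂ)⁻¹ * (if x.2.1 then -1 else 1)) *
        (((Real.sqrt 2 : ℝ) : ℂ)⁻¹ * (if x.2.2.1 && t then -1 else 1)) *
        (((Real.sqrt 2 : ℝ) : ℂ)⁻¹ * (if x.2.2.2 && s then -1 else 1))) :
    Tb (H4 (Ta (H4 (Tb ψin)))) = ψout := by
  classical
  set r := ((Real.sqrt 2 : ℝ) : ℂ)⁻¹ with hrdef
  have h2 : r * r = 1/2 := by
    rw [hrdef, ← mul_inv]
    norm_num [← Complex.ofReal_mul, Real.mul_self_sqrt]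
  -- Step 1: `Tb ψin` in product form
  have key1 : ∀ x : Bool × Bool × Bool × Bool, Tb ψin x =
      ((if s && t then (-1:ℂ) else 1) * r) *
      ((if x.1 = true then (1:ℂ) else 0) * (if x.2.1 then -1 else 1) *
       ((if x.2.2.1 = s then (1:ℂ) else 0) * (if x.2.2.2 = t then 1 else 0))) := by
    intro x
    rw [hTb, hψin]
    obtain ⟨a, b, c, d⟩ := x
    rcases s <;> rcases t <;> rcases a <;> rcases b <;> rcases c <;> rcases d <;>
      norm_num <;> ring
  -- Step 2: apply global Hadamard
  have key2 : ∀ x : Bool × Bool × Bool × Bool, H4 (Tb ψin) x =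
      ((if s && t then (-1:ℂ) else 1) * (r/2)) *
      ((if x.1 then -1 else 1) * (if x.2.1 = true then (1:ℂ) else 0) *
       (if x.2.2.1 && s then -1 else 1) * (if x.2.2.2 && t then -1 else 1)) := by
    intro x
    rw [h4ApplyProdAux H4 hH4 (Tb ψin) ((if s && t then (-1:ℂ) else 1) * r)
      (fun u => if u = true then (1:ℂ) else 0) (fun u => if u then (-1:ℂ) else 1)
      (fun u v => (if u = s then (1:ℂ) else 0) * (if v = t then 1 else 0)) key1 x]
    obtain ⟨a, b, c, d⟩ := x
    rcases s <;> rcases t <;> rcases a <;> rcases b <;> rcases c <;> rcases d <;>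
      norm_num <;> ring
  -- Step 3: apply `Ta`, result in product form
  have key3 : ∀ x : Bool × Bool × Bool × Bool, Ta (H4 (Tb ψin)) x =
      ((if s && t then (-1:ℂ) else 1) * (r/2)) *
      ((if x.1 then (-1:ℂ) else 1) * (if x.2.1 = true then (1:ℂ) else 0) *
       ((if x.2.2.1 && x.2.2.2 then (-1:ℂ) else 1) *
        (if x.2.2.1 && s then -1 else 1) * (if x.2.2.2 && t then -1 else 1))) := by
    intro x
    rw [hTa, key2]
    obtain ⟨a, b, c, d⟩ := x
    rcases a <;> rcases b <;> rcases c <;> rcases d <;> norm_num <;> ring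
  -- Step 4: apply global Hadamard again
  have key4 : ∀ x : Bool × Bool × Bool × Bool, H4 (Ta (H4 (Tb ψin))) x =
      ((if s && t then (-1:ℂ) else 1) * (r/2)) *
      ((if x.1 = true then (1:ℂ) else 0) * (if x.2.1 then -1 else 1) *
       (if (xor s x.2.2.1) && (xor t x.2.2.2) then -1 else 1)) := by
    intro x
    rw [h4ApplyProdAux H4 hH4 (Ta (H4 (Tb ψin)))
      ((if s && t then (-1:ℂ) else 1) * (r/2))
      (fun u => if u then (-1:ℂ) else 1) (fun u => if u = true then (1:ℂ) else 0)
      (fun u v => (if u && v then (-1:ℂ) else 1) *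
        (if u && s then -1 else 1) * (if v && t then -1 else 1)) key3 x]
    obtain ⟨a, b, c, d⟩ := x
    rcases s <;> rcases t <;> rcases a <;> rcases b <;> rcases c <;> rcases d <;>
      norm_num <;> ring
  -- Step 5: final `Tb` and comparison with `ψout`
  rw [hrdef] at h2
  ext x
  rw [hTb, key4, hψout]
  obtain ⟨a, b, c, d⟩ := x
  rcases s <;> rcases t <;> rcases a <;> rcases b <;> rcases c <;> rcases d <;>
    simp only [hrdef] <;>
    norm_num <;>
    first
      | ring1
      | linear_combination ((Real.sqrt 2 : ℝ) : ℂ)⁻¹ * h2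
      | linear_combination (-((Real.sqrt 2 : ℝ) : ℂ)⁻¹) * h2
      | linear_combination (((Real.sqrt 2 : ℝ) : ℂ)⁻¹/2) * h2
      | linear_combination (-(((Real.sqrt 2 : ℝ) : ℂ)⁻¹/2)) * h2
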